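/- arXiv:2002.06028 — 4 statements merged into one kernel-verified Lean document; each statement's English description precedes it below -/
import Mathlib

section
/- Let S ⊆ V be nonempty with V∖S also nonempty, and define γ_S = max_{x ∈ Δ_{V∖S}} min_{i ∈ S} (xᵀAx − (Ax)_i)/(xᵀx). If α > γ_S and x is a local maximizer of f_S^α on Δ, then σ(x) ∩ S ≠ ∅. -/
open Matrix BigOperators

set_option maxHeartbeats 1000000 in
/-- If `α > γ_S = max_{x ∈ Δ_{V∖S}} min_{i ∈ S} (xᵀAx − (Ax)_i)/(xᵀx)` and `x` is a
local maximizer of `f_S^α(y) = yᵀ(A − α Î_S)y` on the simplex Δ, then `σ(x) ∩ S ≠ ∅`. -/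
theorem stmt_1 {n : ℕ} (A : Matrix (Fin n) (Fin n) ℝ) (hA : A.IsSymm)
    (hApos : ∀ i j, 0 ≤ A i j)
    (S : Finset (Fin n)) (hS : S.Nonempty) (hSc : Sᶜ.Nonempty)
    (α : ℝ) (hα0 : 0 < α)
    (γ : ℝ)
    (hγ : γ = sSup ((fun y : Fin n → ℝ =>
        S.inf' hS fun i => (y ⬝ᵥ A.mulVec y - A.mulVec y i) / (y ⬝ᵥ y)) ''
        {y : Fin n → ℝ | (∑ i, y i = 1 ∧ ∀ i, 0 ≤ y i) ∧ ∀ i, 0 < y i → i ∉ S}))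
    (hαγ : γ < α)
    (x : Fin n → ℝ)
    (hx : x ∈ {y : Fin n → ℝ | ∑ i, y i = 1 ∧ ∀ i, 0 ≤ y i})
    (hmax : IsLocalMaxOn
      (fun y : Fin n → ℝ =>
        y ⬝ᵥ (A - α • Matrix.diagonal fun i => if i ∈ S then (0 : ℝ) else 1).mulVec y)
      {y : Fin n → ℝ | ∑ i, y i = 1 ∧ ∀ i, 0 ≤ y i} x) :
    ∃ i ∈ S, 0 < x i := by
  by_contra hcon
  push_neg at hcon
  obtain ⟨hx1, hx2⟩ := hx
  have hxS : ∀ i ∈ S, x i = 0 := fun i hi => le_antisymm (hcon i hi) (hx2 i)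
  obtain ⟨i₀, hi₀⟩ := id hS
  have hn : 0 < n := i₀.pos
  have hnR : (0:ℝ) < n := by exact_mod_cast hn
  -- positivity of y⬝y on the simplex, with quantitative bound
  have hden : ∀ y : Fin n → ℝ, (∑ i, y i = 1) → (1:ℝ)/n ≤ y ⬝ᵥ y := by
    intro y hy
    have h1 : (1:ℝ) ≤ (n:ℝ) * (y ⬝ᵥ y) := by
      have := sq_sum_le_card_mul_sum_sq (s := Finset.univ) (f := y)
      simp only [hy, Finset.card_univ, Fintype.card_fin, one_pow] at this
      calc (1:ℝ) ≤ (n:ℝ) * ∑ i, y i ^ 2 := this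
        _ = (n:ℝ) * (y ⬝ᵥ y) := by simp [dotProduct, sq]
    rw [div_le_iff₀ hnR]
    linarith
  have hden' : ∀ y : Fin n → ℝ, (∑ i, y i = 1) → 0 < y ⬝ᵥ y := by
    intro y hy
    exact lt_of_lt_of_le (by positivity) (hden y hy)
  have hxx : 0 < x ⬝ᵥ x := hden' x hx1
  -- bound the image set above
  set Mb : ℝ := ∑ i, ∑ j, A i j with hMb
  have hMb0 : 0 ≤ Mb := Finset.sum_nonneg fun i _ => Finset.sum_nonneg fun j _ => hApos i j
  have hbdd : ∀ z ∈ ((fun y : Fin n → ℝ =>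
        S.inf' hS fun i => (y ⬝ᵥ A.mulVec y - A.mulVec y i) / (y ⬝ᵥ y)) ''
        {y : Fin n → ℝ | (∑ i, y i = 1 ∧ ∀ i, 0 ≤ y i) ∧ ∀ i, 0 < y i → i ∉ S}),
      z ≤ Mb * n := by
    rintro z ⟨y, ⟨⟨hy1, hy2⟩, -⟩, rfl⟩
    have hyd := hden' y hy1
    have hyd2 := hden y hy1
    have hyle1 : ∀ j, y j ≤ 1 := by
      intro j
      calc y j ≤ ∑ i, y i := Finset.single_le_sum (fun i _ => hy2 i) (Finset.mem_univ j)
        _ = 1 := hy1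
    have hnum : y ⬝ᵥ A.mulVec y ≤ Mb := by
      rw [hMb]
      simp only [dotProduct, Matrix.mulVec, dotProduct, Finset.mul_sum]
      apply Finset.sum_le_sum; intro i _
      apply Finset.sum_le_sum; intro j _
      have hyy : y i * y j ≤ 1 := mul_le_one₀ (hyle1 i) (hy2 j) (hyle1 j)
      calc y i * (A i j * y j) = (y i * y j) * A i j := by ring
        _ ≤ 1 * A i j := mul_le_mul_of_nonneg_right hyy (hApos i j)
        _ = A i j := one_mul _
    have hAy0 : 0 ≤ A.mulVec y i₀ := by
      simp only [Matrix.mulVec, dotProduct]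
      exact Finset.sum_nonneg fun j _ => mul_nonneg (hApos i₀ j) (hy2 j)
    refine le_trans (Finset.inf'_le _ hi₀) ?_
    rw [div_le_iff₀ hyd]
    calc y ⬝ᵥ A.mulVec y - A.mulVec y i₀ ≤ Mb := by linarith
      _ = Mb * n * (1/n) := by field_simp
      _ ≤ Mb * n * (y ⬝ᵥ y) := by
          apply mul_le_mul_of_nonneg_left hyd2; positivity
  -- x belongs to the domain of the sup
  have hxdom : x ∈ {y : Fin n → ℝ | (∑ i, y i = 1 ∧ ∀ i, 0 ≤ y i) ∧ ∀ i, 0 < y i → i ∉ S} := by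
    refine ⟨⟨hx1, hx2⟩, fun i hi hiS => ?_⟩
    exact absurd (hxS i hiS) (ne_of_gt hi)
  have hinfγ : (S.inf' hS fun i => (x ⬝ᵥ A.mulVec x - A.mulVec x i) / (x ⬝ᵥ x)) ≤ γ := by
    rw [hγ]
    exact le_csSup ⟨Mb * n, fun z hz => hbdd z hz⟩ ⟨x, hxdom, rfl⟩
  obtain ⟨i, hiS, hie⟩ := S.exists_mem_eq_inf' hS
    (fun i => (x ⬝ᵥ A.mulVec x - A.mulVec x i) / (x ⬝ᵥ x))
  have hqi : (x ⬝ᵥ A.mulVec x - A.mulVec x i) / (x ⬝ᵥ x) < α := by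
    rw [← hie]
    exact lt_of_le_of_lt hinfγ hαγ
  have hkey : x ⬝ᵥ A.mulVec x - A.mulVec x i < α * (x ⬝ᵥ x) := by
    rw [div_lt_iff₀ hxx] at hqi; linarith [hqi]
  -- set up the perturbation
  set Mt : Matrix (Fin n) (Fin n) ℝ :=
    A - α • Matrix.diagonal fun i => if i ∈ S then (0:ℝ) else 1 with hMt
  set f : (Fin n → ℝ) → ℝ := fun y => y ⬝ᵥ Mt.mulVec y with hf
  have hMtsymm : Mtᵀ = Mt := by
    rw [hMt, Matrix.transpose_sub, Matrix.transpose_smul, Matrix.diagonal_transpose, hA]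
  set v : Fin n → ℝ := Pi.single i 1 - x with hv
  have hexp : ∀ t : ℝ, f (x + t • v) = f x +
      t * ((x ⬝ᵥ Mt.mulVec v + v ⬝ᵥ Mt.mulVec x) + t * (v ⬝ᵥ Mt.mulVec v)) := by
    intro t
    simp only [hf, Matrix.mulVec_add, Matrix.mulVec_smul, dotProduct_add, add_dotProduct,
      dotProduct_smul, smul_dotProduct, smul_eq_mul]
    ring
  -- symmetry: x ⬝ Mt v = v ⬝ Mt x
  have hsym : ∀ u w : Fin n → ℝ, u ⬝ᵥ Mt.mulVec w = w ⬝ᵥ Mt.mulVec u := by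
    intro u w
    rw [dotProduct_mulVec, ← Matrix.mulVec_transpose, hMtsymm, dotProduct_comm]
  -- compute v ⬝ Mt x
  have hDx : (Matrix.diagonal fun j => if j ∈ S then (0:ℝ) else 1).mulVec x = x := by
    funext j
    rw [Matrix.mulVec_diagonal]
    by_cases hj : j ∈ S
    · simp [hj, hxS j hj]
    · simp [hj]
  have hMtx : Mt.mulVec x = A.mulVec x - α • x := by
    rw [hMt, Matrix.sub_mulVec, Matrix.smul_mulVec, hDx]
  have hxi : x i = 0 := hxS i hiS
  have hfx : f x = x ⬝ᵥ A.mulVec x - α * (x ⬝ᵥ x) := by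
    show x ⬝ᵥ Mt.mulVec x = _
    rw [hMtx, dotProduct_sub, dotProduct_smul, smul_eq_mul]
  have hvMx : v ⬝ᵥ Mt.mulVec x = A.mulVec x i - f x := by
    have hfx' : f x = x ⬝ᵥ Mt.mulVec x := rfl
    rw [hv, sub_dotProduct, single_dotProduct, one_mul, hfx', hMtx]
    simp [Pi.sub_apply, Pi.smul_apply, smul_eq_mul, hxi]
  set b : ℝ := x ⬝ᵥ Mt.mulVec v + v ⬝ᵥ Mt.mulVec x with hb
  have hbval : b = 2 * (A.mulVec x i - f x) := by
    rw [hb, hsym x v, hvMx]; ring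
  have hbpos : 0 < b := by
    rw [hbval, hfx]; linarith
  set c : ℝ := v ⬝ᵥ Mt.mulVec v with hc
  -- path into the simplex
  set φ : ℝ → (Fin n → ℝ) := fun t => x + t • v with hφ
  have hφmem : ∀ t ∈ Set.Ioo (0:ℝ) 1, φ t ∈ {y : Fin n → ℝ | ∑ i, y i = 1 ∧ ∀ i, 0 ≤ y i} := by
    rintro t ⟨ht0, ht1⟩
    constructor
    · have : ∑ j, (x j + t * ((Pi.single i 1 : Fin n → ℝ) j - x j)) = 1 := by
        rw [Finset.sum_add_distrib, ← Finset.mul_sum]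
        rw [Finset.sum_sub_distrib]
        rw [Finset.sum_pi_single']
        simp [hx1]
      simpa [hφ, hv] using this
    · intro j
      have : 0 ≤ (1 - t) * x j + t * (Pi.single i 1 : Fin n → ℝ) j := by
        have h1 : (0:ℝ) ≤ (Pi.single i 1 : Fin n → ℝ) j := by
          rcases eq_or_ne j i with hji | hji
          · subst hji; simp
          · simp [Pi.single_eq_of_ne hji]
        have := hx2 j
        nlinarith
      simpa [hφ, hv] using this.trans_eq (by ring)
  have hφtend : Filter.Tendsto φ (nhdsWithin 0 (Set.Ioi 0))
      (nhdsWithin x {y : Fin n → ℝ | ∑ i, y i = 1 ∧ ∀ i, 0 ≤ y i}) := by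
    rw [tendsto_nhdsWithin_iff]
    constructor
    · have hcont : Continuous φ := by
        rw [hφ]; exact continuous_const.add (continuous_id.smul continuous_const)
      have : φ 0 = x := by simp [hφ]
      have := hcont.tendsto 0
      rw [‹φ 0 = x›] at this
      exact this.mono_left nhdsWithin_le_nhds
    · filter_upwards [Ioo_mem_nhdsGT (zero_lt_one)] with t ht
      exact hφmem t ht
  have hφt : ∀ t, φ t = x + t • v := fun _ => rfl
  clear_value Mb Mt f v b c φ
  have h1 : ∀ᶠ t in nhdsWithin 0 (Set.Ioi 0), f (φ t) ≤ f x := hφtend.eventually hmax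
  have h2 : ∀ᶠ t in nhdsWithin 0 (Set.Ioi 0), f x < f (φ t) := by
    have hδ : 0 < b / (|c| + 1) := by positivity
    filter_upwards [Ioo_mem_nhdsGT hδ] with t ⟨ht0, htδ⟩
    rw [hφt t, hexp t]
    have e1 : t * (-|c|) ≤ t * c := mul_le_mul_of_nonneg_left (neg_abs_le c) ht0.le
    have e2 : t * |c| ≤ t * (|c| + 1) :=
      mul_le_mul_of_nonneg_left (by linarith [abs_nonneg c]) ht0.le
    have hlt : t * (|c| + 1) < b := (lt_div_iff₀ (by positivity : (0:ℝ) < |c| + 1)).mp htδ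
    have hpos : 0 < b + t * c := by
      have h3 : t * (-|c|) = -(t * |c|) := by ring
      linarith
    have h4 : 0 < t * (b + t * c) := mul_pos ht0 hpos
    linarith
  obtain ⟨t, htle, htlt⟩ := (h1.and h2).exists
  exact absurd htle (not_le.mpr htlt)
end

section
/- Let S ⊆ V be nonempty with V∖S also nonempty, and define γ_S = max_{x ∈ Δ_{V∖S}} min_{i ∈ S} (xᵀAx − (Ax)_i)/(xᵀx). Then γ_S ≤ λ_max(A_{V∖S}), where λ_max(A_{V∖S}) is the largest eigenvalue of the principal submatrix of A indexed by the elements of V∖S. -/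
open Matrix BigOperators

lemma rayleigh_aux {m : Type*} [Fintype m] [DecidableEq m] [Nonempty m]
    (B : Matrix m m ℝ) (hB : B.IsHermitian) (x : m → ℝ) :
    x ⬝ᵥ B *ᵥ x ≤ (⨆ j, hB.eigenvalues j) * (x ⬝ᵥ x) := by
  classical
  set U : Matrix m m ℝ := (hB.eigenvectorUnitary : Matrix m m ℝ) with hU
  have hUnit := hB.eigenvectorUnitary.2
  have hUU : U * star U = 1 := hUnit.2
  set y : m → ℝ := x ᵥ* U with hy
  have hsy : star U *ᵥ x = y := by
    ext j; simp [hy, Matrix.mulVec, Matrix.vecMul, dotProduct, mul_comm]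
  have hyy : y ⬝ᵥ y = x ⬝ᵥ x := by
    calc y ⬝ᵥ y = (x ᵥ* U) ⬝ᵥ (star U *ᵥ x) := by rw [hsy, hy]
    _ = x ⬝ᵥ x := by
        rw [dotProduct_mulVec, Matrix.vecMul_vecMul, hUU, Matrix.vecMul_one]
  have key : x ⬝ᵥ B *ᵥ x = ∑ j, hB.eigenvalues j * (y j * y j) := by
    conv_lhs => rw [hB.spectral_theorem, Unitary.conjStarAlgAut_apply]
    rw [← Matrix.mulVec_mulVec, ← Matrix.mulVec_mulVec, hsy,
      dotProduct_mulVec, ← hy]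
    simp [dotProduct, Matrix.mulVec_diagonal]
    apply Finset.sum_congr rfl; intro j _; ring
  rw [key, hyy.symm]
  have hbdd : BddAbove (Set.range hB.eigenvalues) := Set.Finite.bddAbove (Set.finite_range _)
  rw [dotProduct, Finset.mul_sum]
  apply Finset.sum_le_sum
  intro j _
  have h1 : hB.eigenvalues j ≤ ⨆ k, hB.eigenvalues k := le_ciSup hbdd j
  nlinarith [mul_self_nonneg (y j)]

/-- `γ_S = max_{x ∈ Δ_{V∖S}} min_{i ∈ S} (xᵀAx − (Ax)_i)/(xᵀx)` is bounded above by
`λ_max(A_{V∖S})`, the largest eigenvalue of the principal submatrix of `A` indexed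
by the elements of `V∖S`. -/
theorem stmt_2 {n : ℕ} (A : Matrix (Fin n) (Fin n) ℝ) (hA : A.IsSymm)
    (hApos : ∀ i j, 0 ≤ A i j)
    (S : Finset (Fin n)) (hS : S.Nonempty) (hSc : Sᶜ.Nonempty)
    (γ : ℝ)
    (hγ : γ = sSup ((fun y : Fin n → ℝ =>
        S.inf' hS fun i => (y ⬝ᵥ A.mulVec y - A.mulVec y i) / (y ⬝ᵥ y)) ''
        {y : Fin n → ℝ | (∑ i, y i = 1 ∧ ∀ i, 0 ≤ y i) ∧ ∀ i, 0 < y i → i ∉ S}))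
    (B : Matrix {i : Fin n // i ∈ Sᶜ} {i : Fin n // i ∈ Sᶜ} ℝ)
    (hB : B = A.submatrix Subtype.val Subtype.val)
    (hherm : B.IsHermitian) :
    γ ≤ ⨆ j, hherm.eigenvalues j := by
  classical
  haveI : Nonempty {i : Fin n // i ∈ Sᶜ} := ⟨⟨hSc.choose, hSc.choose_spec⟩⟩
  set lam := ⨆ j, hherm.eigenvalues j with hlam
  -- λmax is nonnegative
  have hlam0 : 0 ≤ lam := by
    obtain ⟨k⟩ := ‹Nonempty {i : Fin n // i ∈ Sᶜ}›
    have hr := rayleigh_aux B hherm (Pi.single k 1)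
    have h1 : (Pi.single k 1 : {i : Fin n // i ∈ Sᶜ} → ℝ) ⬝ᵥ
        (Pi.single k 1) = 1 := by
      simp [dotProduct, Pi.single_apply]
    have h2 : (Pi.single k 1 : {i : Fin n // i ∈ Sᶜ} → ℝ) ⬝ᵥ
        B *ᵥ (Pi.single k 1) = B k k := by
      simp [dotProduct, Matrix.mulVec, Pi.single_apply, Finset.sum_ite_eq,
        mul_comm]
    rw [h1, h2, mul_one] at hr
    have : 0 ≤ B k k := by rw [hB]; exact hApos _ _
    linarith
  rw [hγ]
  apply Real.sSup_le _ hlam0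
  rintro v ⟨x, ⟨⟨hx1, hx0⟩, hsupp⟩, rfl⟩
  -- x vanishes on S
  have hz : ∀ i ∈ S, x i = 0 := by
    intro i hi
    by_contra h
    exact hsupp i (lt_of_le_of_ne (hx0 i) (Ne.symm h)) hi
  -- x ⬝ᵥ x > 0
  have hxx : 0 < x ⬝ᵥ x := by
    obtain ⟨i, hi⟩ : ∃ i, x i ≠ 0 := by
      by_contra h
      push_neg at h
      simp [h] at hx1
    have hipos : 0 < x i := (hx0 i).lt_of_ne (Ne.symm hi)
    have hle : x i * x i ≤ x ⬝ᵥ x := by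
      unfold dotProduct
      exact Finset.single_le_sum (fun j _ => mul_nonneg (hx0 j) (hx0 j))
        (Finset.mem_univ i)
    nlinarith
  -- restriction of x to Sᶜ
  subst hB
  set x' : {i : Fin n // i ∈ Sᶜ} → ℝ := fun j => x j.1 with hx'
  have hvanish : ∀ (f : Fin n → ℝ), (∀ i ∈ S, f i = 0) →
      ∑ i, f i = ∑ i ∈ Sᶜ, f i := by
    intro f hf
    symm
    apply Finset.sum_subset (Finset.subset_univ _)
    intro i _ hiS
    rw [Finset.mem_compl, not_not] at hiS
    exact hf i hiS
  have heq2 : x ⬝ᵥ x = x' ⬝ᵥ x' := by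
    show ∑ i, x i * x i = ∑ i : {i : Fin n // i ∈ Sᶜ}, x i.1 * x i.1
    rw [Finset.sum_coe_sort (Sᶜ) (fun i => x i * x i)]
    exact hvanish _ (fun i hi => by simp [hz i hi])
  have hinner : ∀ i, A.mulVec x i = ∑ j ∈ Sᶜ, A i j * x j := by
    intro i
    show ∑ j, A i j * x j = _
    exact hvanish _ (fun j hj => by simp [hz j hj])
  have heq1 : x ⬝ᵥ A.mulVec x
      = x' ⬝ᵥ (A.submatrix Subtype.val Subtype.val) *ᵥ x' := by
    have h1 : x' ⬝ᵥ (A.submatrix Subtype.val Subtype.val) *ᵥ x'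
        = ∑ i : {i : Fin n // i ∈ Sᶜ}, x i.1 * ∑ j ∈ Sᶜ, A i.1 j * x j := by
      show ∑ i : {i : Fin n // i ∈ Sᶜ}, x i.1 * (∑ j : {i : Fin n // i ∈ Sᶜ},
        A i.1 j.1 * x j.1) = _
      refine Finset.sum_congr rfl fun i _ => ?_
      congr 1
      exact Finset.sum_coe_sort (Sᶜ) (fun j => A i.1 j * x j)
    rw [h1, Finset.sum_coe_sort (Sᶜ) (fun i => x i * ∑ j ∈ Sᶜ, A i j * x j)]
    have h2 : x ⬝ᵥ A.mulVec x = ∑ i, x i * ∑ j ∈ Sᶜ, A i j * x j :=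
      Finset.sum_congr rfl (fun i _ => by rw [hinner i])
    rw [h2]
    exact hvanish _ (fun i hi => by simp [hz i hi])
  -- the Rayleigh bound
  have hray : x ⬝ᵥ A.mulVec x ≤ lam * (x ⬝ᵥ x) := by
    rw [heq1, heq2]
    exact rayleigh_aux _ hherm x'
  -- (A x) i₀ ≥ 0 for the chosen i₀
  obtain ⟨i₀, hi₀⟩ := hS
  have hmin := Finset.inf'_le (b := i₀)
    (fun i => (x ⬝ᵥ A.mulVec x - A.mulVec x i) / (x ⬝ᵥ x)) hi₀
  refine hmin.trans ?_
  have hAx0 : 0 ≤ A.mulVec x i₀ := by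
    unfold Matrix.mulVec dotProduct
    exact Finset.sum_nonneg fun j _ => mul_nonneg (hApos i₀ j) (hx0 j)
  rw [div_le_iff₀ hxx]
  calc x ⬝ᵥ A.mulVec x - A.mulVec x i₀ ≤ x ⬝ᵥ A.mulVec x := by linarith
  _ ≤ lam * (x ⬝ᵥ x) := hray
end

section
/- Let S ⊆ V be nonempty with V∖S also nonempty. If α > λ_max(A_{V∖S}), the largest eigenvalue of the principal submatrix of A indexed by the elements of V∖S, then every local maximizer x of f_S^α on Δ satisfies σ(x) ∩ S ≠ ∅; that is, the support of every local solution necessarily contains elements of S. -/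
open Matrix BigOperators
set_option maxHeartbeats 1000000 in

private lemma rayleigh_le' {m : Type*} [Fintype m] [DecidableEq m] [Nonempty m]
    {B : Matrix m m ℝ} (hB : B.IsHermitian) (v : m → ℝ) :
    v ⬝ᵥ B *ᵥ v ≤ (⨆ j, hB.eigenvalues j) * (v ⬝ᵥ v) := by
  set U : Matrix m m ℝ := (hB.eigenvectorUnitary : Matrix m m ℝ) with hUdef
  have hstar : star U = Uᵀ := by
    ext i j; simp [Matrix.conjTranspose_apply]
  have hUU : U * Uᵀ = 1 := by
    rw [← hstar]; exact (Matrix.mem_unitaryGroup_iff).mp hB.eigenvectorUnitary.2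
  set w : m → ℝ := Uᵀ *ᵥ v with hwdef
  have hww : w ⬝ᵥ w = v ⬝ᵥ v := by
    rw [hwdef, Matrix.dotProduct_mulVec, Matrix.mulVec_transpose, Matrix.vecMul_vecMul,
      hUU, Matrix.vecMul_one]
  set μ := ⨆ j, hB.eigenvalues j with hμdef
  have hD : v ⬝ᵥ B *ᵥ v = ∑ i, hB.eigenvalues i * (w i)^2 := by
    conv_lhs => rw [hB.spectral_theorem, Unitary.conjStarAlgAut_apply]
    rw [← Matrix.mulVec_mulVec, ← Matrix.mulVec_mulVec, hstar, Matrix.dotProduct_mulVec,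
      ← Matrix.mulVec_transpose, ← hwdef, Matrix.dotProduct_mulVec]
    have h2 : w ᵥ* diagonal (RCLike.ofReal ∘ hB.eigenvalues) = fun i => hB.eigenvalues i * w i := by
      ext i; rw [Matrix.vecMul_diagonal]; simp [mul_comm]
    rw [h2]
    simp only [dotProduct]
    exact Finset.sum_congr rfl fun i _ => by ring
  rw [hD, ← hww]
  have h3 : μ * (w ⬝ᵥ w) = ∑ i, μ * (w i)^2 := by
    simp [dotProduct, Finset.mul_sum, pow_two]
  rw [h3]
  apply Finset.sum_le_sum
  intro i _
  have h1 : hB.eigenvalues i ≤ μ := le_ciSup (Set.Finite.bddAbove (Set.finite_range _)) i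
  nlinarith [sq_nonneg (w i)]

/-- If `α > λ_max(A_{V∖S})`, the largest eigenvalue of the principal submatrix of `A`
indexed by `V∖S`, then every local maximizer `x` of `f_S^α(y) = yᵀ(A − α Î_S)y` on the
standard simplex Δ satisfies `σ(x) ∩ S ≠ ∅`. -/
theorem stmt_3 {n : ℕ} (A : Matrix (Fin n) (Fin n) ℝ) (hA : A.IsSymm)
    (hApos : ∀ i j, 0 ≤ A i j)
    (S : Finset (Fin n)) (hS : S.Nonempty) (hSc : Sᶜ.Nonempty)
    (B : Matrix {i : Fin n // i ∈ Sᶜ} {i : Fin n // i ∈ Sᶜ} ℝ)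
    (hB : B = A.submatrix Subtype.val Subtype.val)
    (hherm : B.IsHermitian)
    (α : ℝ) (hα : (⨆ j, hherm.eigenvalues j) < α)
    (x : Fin n → ℝ)
    (hx : x ∈ {y : Fin n → ℝ | ∑ i, y i = 1 ∧ ∀ i, 0 ≤ y i})
    (hmax : IsLocalMaxOn
      (fun y : Fin n → ℝ =>
        y ⬝ᵥ (A - α • Matrix.diagonal fun i => if i ∈ S then (0 : ℝ) else 1).mulVec y)
      {y : Fin n → ℝ | ∑ i, y i = 1 ∧ ∀ i, 0 ≤ y i} x) :
    ∃ i ∈ S, 0 < x i := by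

  by_contra hcon
  push_neg at hcon
  obtain ⟨hsum, hnn⟩ := hx
  have hxS : ∀ i ∈ S, x i = 0 := fun i hi => le_antisymm (hcon i hi) (hnn i)
  have hx0 : ∀ i : Fin n, i ∉ Sᶜ → x i = 0 := by
    intro i hi
    exact hxS i (by simpa using hi)
  haveI : Nonempty {i : Fin n // i ∈ Sᶜ} := ⟨⟨hSc.choose, hSc.choose_spec⟩⟩
  set d : Fin n → ℝ := fun i => if i ∈ S then (0 : ℝ) else 1 with hd
  set M : Matrix (Fin n) (Fin n) ℝ := A - α • Matrix.diagonal d with hM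
  set f : (Fin n → ℝ) → ℝ := fun y => y ⬝ᵥ M *ᵥ y with hf
  set s : Set (Fin n → ℝ) := {y : Fin n → ℝ | ∑ i, y i = 1 ∧ ∀ i, 0 ≤ y i} with hs
  -- restriction of x to Sᶜ
  set v : {i : Fin n // i ∈ Sᶜ} → ℝ := fun i => x i with hv
  -- x^T A x = v^T B v
  have e1 : ∀ i : Fin n, ∑ j ∈ Sᶜ, A i j * x j = ∑ j, A i j * x j := by
    intro i
    apply Finset.sum_subset (Finset.subset_univ _)
    intro j _ hj
    rw [hx0 j hj, mul_zero]
  have key1 : v ⬝ᵥ B *ᵥ v = x ⬝ᵥ A *ᵥ x := by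
    have inner : ∀ i : Fin n, (∑ j : {j : Fin n // j ∈ Sᶜ}, A i j * x j) = ∑ j, A i j * x j := by
      intro i
      rw [Finset.sum_coe_sort Sᶜ (fun j => A i j * x j), e1 i]
    calc v ⬝ᵥ B *ᵥ v = ∑ i : {i : Fin n // i ∈ Sᶜ}, x i * ∑ j : {j : Fin n // j ∈ Sᶜ}, A i j * x j := by
          simp [hB, dotProduct, Matrix.mulVec, Matrix.submatrix_apply, hv]
      _ = ∑ i : {i : Fin n // i ∈ Sᶜ}, x i * ∑ j, A (i : Fin n) j * x j := by
          exact Finset.sum_congr rfl fun i _ => by rw [inner i]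
      _ = ∑ i ∈ Sᶜ, x i * ∑ j, A i j * x j := Finset.sum_coe_sort Sᶜ (fun i => x i * ∑ j, A i j * x j)
      _ = ∑ i, x i * ∑ j, A i j * x j := by
          apply Finset.sum_subset (Finset.subset_univ _)
          intro i _ hi
          rw [hx0 i hi, zero_mul]
      _ = x ⬝ᵥ A *ᵥ x := by simp [dotProduct, Matrix.mulVec]
  -- x^T D x = v ⬝ᵥ v
  have key2 : x ⬝ᵥ (Matrix.diagonal d) *ᵥ x = v ⬝ᵥ v := by
    have : x ⬝ᵥ (Matrix.diagonal d) *ᵥ x = ∑ i, x i * (d i * x i) := by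
      simp [dotProduct, Matrix.mulVec_diagonal]
    rw [this]
    calc ∑ i, x i * (d i * x i) = ∑ i ∈ Sᶜ, x i * (d i * x i) := by
          symm
          apply Finset.sum_subset (Finset.subset_univ _)
          intro i _ hi
          rw [hx0 i hi, zero_mul]
      _ = ∑ i ∈ Sᶜ, x i * x i := by
          apply Finset.sum_congr rfl
          intro i hi
          have : d i = 1 := by simp [hd, Finset.mem_compl.mp hi]
          rw [this, one_mul]
      _ = ∑ i : {i : Fin n // i ∈ Sᶜ}, x i * x i := (Finset.sum_coe_sort Sᶜ (fun i => x i * x i)).symm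
      _ = v ⬝ᵥ v := by simp [dotProduct, hv]
  -- v ⬝ᵥ v > 0
  have hsumc : ∑ i ∈ Sᶜ, x i = 1 := by
    rw [← hsum]
    apply Finset.sum_subset (Finset.subset_univ _)
    intro i _ hi
    exact hx0 i hi
  have hvv : 0 < v ⬝ᵥ v := by
    obtain ⟨i, hi, hipos⟩ : ∃ i ∈ Sᶜ, (0:ℝ) < x i := by
      by_contra hno
      push_neg at hno
      have : ∑ i ∈ Sᶜ, x i = 0 :=
        Finset.sum_eq_zero fun i hi => le_antisymm (hno i hi) (hnn i)
      rw [hsumc] at this; norm_num at this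
    have h1 : x i * x i ≤ ∑ k ∈ Sᶜ, x k * x k :=
      Finset.single_le_sum (fun k _ => mul_nonneg (hnn k) (hnn k)) hi
    have h2 : v ⬝ᵥ v = ∑ k ∈ Sᶜ, x k * x k := by
      rw [← Finset.sum_coe_sort Sᶜ (fun k => x k * x k)]; simp [dotProduct, hv]
    nlinarith
  -- f x < 0
  have hfx : f x < 0 := by
    have hfx1 : f x = x ⬝ᵥ A *ᵥ x - α * (x ⬝ᵥ (Matrix.diagonal d) *ᵥ x) := by
      simp only [hf, hM, Matrix.sub_mulVec, dotProduct_sub, Matrix.smul_mulVec,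
        dotProduct_smul, smul_eq_mul]
    have hray := rayleigh_le' hherm v
    rw [hfx1, ← key1, key2]
    have : (⨆ j, hherm.eigenvalues j) * (v ⬝ᵥ v) < α * (v ⬝ᵥ v) :=
      mul_lt_mul_of_pos_right hα hvv
    linarith
  -- perturbation towards j ∈ S
  obtain ⟨j, hj⟩ := hS
  set e : Fin n → ℝ := Pi.single j 1 with he
  set φ : ℝ → Fin n → ℝ := fun ε => (1 - ε) • x + ε • e with hφ
  have expand : ∀ ε : ℝ, f (φ ε) = (1-ε)^2 * f x
      + (ε*(1-ε)) * (x ⬝ᵥ M *ᵥ e + e ⬝ᵥ M *ᵥ x) + ε^2 * (e ⬝ᵥ M *ᵥ e) := by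
    intro ε
    simp only [hf, hφ, Matrix.mulVec_add, Matrix.mulVec_smul, dotProduct_add,
      add_dotProduct, smul_dotProduct, dotProduct_smul, smul_eq_mul]
    ring
  have hMcol : ∀ i, M i j = A i j := by
    intro i
    simp only [hM, Matrix.sub_apply, Matrix.smul_apply, Matrix.diagonal_apply, smul_eq_mul]
    rcases eq_or_ne i j with rfl | hne
    · simp [hd, hj]
    · simp [hne]
  have hMrow : ∀ k, M j k = A j k := by
    intro k
    simp only [hM, Matrix.sub_apply, Matrix.smul_apply, Matrix.diagonal_apply, smul_eq_mul]
    rcases eq_or_ne j k with rfl | hne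
    · simp [hd, hj]
    · simp [hne]
  have hxMe : 0 ≤ x ⬝ᵥ M *ᵥ e := by
    have : x ⬝ᵥ M *ᵥ e = ∑ i, x i * A i j := by
      simp only [he, Matrix.mulVec_single, MulOpposite.op_one, one_smul, Matrix.col_apply, mul_one, dotProduct]
      exact Finset.sum_congr rfl fun i _ => by rw [hMcol i]
    rw [this]
    exact Finset.sum_nonneg fun i _ => mul_nonneg (hnn i) (hApos i j)
  have heMx : 0 ≤ e ⬝ᵥ M *ᵥ x := by
    have : e ⬝ᵥ M *ᵥ x = ∑ k, A j k * x k := by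
      rw [he, single_dotProduct, one_mul]
      simp only [Matrix.mulVec, dotProduct]
      exact Finset.sum_congr rfl fun k _ => by rw [hMrow k]
    rw [this]
    exact Finset.sum_nonneg fun k _ => mul_nonneg (hApos j k) (hnn k)
  have heMe : 0 ≤ e ⬝ᵥ M *ᵥ e := by
    have : e ⬝ᵥ M *ᵥ e = A j j := by
      simp only [he, Matrix.mulVec_single, MulOpposite.op_one, one_smul, Matrix.col_apply, mul_one, single_dotProduct, one_mul]
      exact hMcol j
    rw [this]; exact hApos j j
  -- values along φ beat f x
  have hgt : ∀ ε ∈ Set.Ioo (0:ℝ) 1, f x < f (φ ε) := by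
    intro ε hε
    obtain ⟨hε0, hε1⟩ := hε
    rw [expand ε]
    nlinarith [mul_nonneg (mul_nonneg hε0.le (by linarith : (0:ℝ) ≤ 1 - ε))
      (add_nonneg hxMe heMx), mul_nonneg (sq_nonneg ε) heMe,
      mul_pos (mul_pos hε0 (by linarith : (0:ℝ) < 2 - ε)) (neg_pos.mpr hfx)]
  -- φ ε ∈ s for ε ∈ (0,1)
  have hmem : ∀ ε ∈ Set.Ioo (0:ℝ) 1, φ ε ∈ s := by
    intro ε hε
    obtain ⟨hε0, hε1⟩ := hε
    constructor
    · simp only [hφ, Pi.add_apply, Pi.smul_apply, smul_eq_mul, Finset.sum_add_distrib,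
        ← Finset.mul_sum, hsum, he, Finset.sum_pi_single]
      simp
    · intro i
      have h1 : (0:ℝ) ≤ (1 - ε) * x i := mul_nonneg (by linarith) (hnn i)
      have h2 : (0:ℝ) ≤ ε * e i := by
        apply mul_nonneg hε0.le
        rw [he, Pi.single_apply]
        split <;> norm_num
      simpa [hφ] using add_nonneg h1 h2
  -- tendsto
  have htend : Filter.Tendsto φ (nhdsWithin 0 (Set.Ioi 0)) (nhdsWithin x s) := by
    rw [tendsto_nhdsWithin_iff]
    constructor
    · have hc : Continuous φ :=
        ((continuous_const.sub continuous_id).smul continuous_const).add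
          (continuous_id.smul continuous_const)
      have hφ0 : φ 0 = x := by
        ext i; simp [hφ]
      have := hc.tendsto 0
      rw [hφ0] at this
      exact this.mono_left nhdsWithin_le_nhds
    · filter_upwards [Ioo_mem_nhdsGT_of_mem (Set.mem_Ico.mpr ⟨le_refl 0, one_pos⟩)] with ε hε
      exact hmem ε hε
  have hle : ∀ᶠ ε in nhdsWithin 0 (Set.Ioi 0), f (φ ε) ≤ f x := htend.eventually hmax
  have hIoo : ∀ᶠ ε in nhdsWithin 0 (Set.Ioi 0), ε ∈ Set.Ioo (0:ℝ) 1 :=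
    Ioo_mem_nhdsGT_of_mem (Set.mem_Ico.mpr ⟨le_refl 0, one_pos⟩)
  obtain ⟨ε, h1, h2⟩ := (hle.and hIoo).exists
  exact absurd h1 (not_le.mpr (hgt ε h2))
end

section
/- Let W be symmetric with C + W_{ij} > 0 for all i, j, let x ∈ Δ, and let y be the discrete-time replicator update y_i = x_i·(C + (Wx)_i)/(C + xᵀWx) (the denominator is positive under these hypotheses). Then yᵀWy ≥ xᵀWx, with equality if and only if y = x; that is, the quadratic form xᵀWx is strictly increasing along any nonstationary trajectory of the discrete-time replicator dynamics. -/
open Matrix BigOperators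

/-- Discrete-time Fundamental Theorem of Natural Selection: for symmetric `W` with
`C + W_{ij} > 0` for all `i, j` and `x ∈ Δ`, the replicator update
`y_i = x_i·(C + (Wx)_i)/(C + xᵀWx)` satisfies `yᵀWy ≥ xᵀWx`, with equality
if and only if `y = x`. -/
theorem stmt_10 {n : ℕ} (W : Matrix (Fin n) (Fin n) ℝ) (hW : W.IsSymm) (C : ℝ)
    (hC : ∀ i j, 0 < C + W i j)
    (x : Fin n → ℝ)
    (hx : x ∈ {z : Fin n → ℝ | ∑ i, z i = 1 ∧ ∀ i, 0 ≤ z i})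
    (y : Fin n → ℝ)
    (hy : y = fun i => x i * (C + W.mulVec x i) / (C + x ⬝ᵥ W.mulVec x)) :
    x ⬝ᵥ W.mulVec x ≤ y ⬝ᵥ W.mulVec y ∧
      (y ⬝ᵥ W.mulVec y = x ⬝ᵥ W.mulVec x ↔ y = x) := by
  obtain ⟨hsum, hnn⟩ := hx
  classical
  set w : Fin n → ℝ := fun i => C + W.mulVec x i with hwdef
  set S : ℝ := C + x ⬝ᵥ W.mulVec x with hSdef
  -- expansion of w
  have hrow : ∀ (z : Fin n → ℝ) (i : Fin n),
      ∑ j, (C + W i j) * z j = C * (∑ j, z j) + W.mulVec z i := by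
    intro z i
    simp only [Matrix.mulVec, dotProduct]
    rw [Finset.mul_sum, ← Finset.sum_add_distrib]
    exact Finset.sum_congr rfl fun j _ => by ring
  have hwexp : ∀ i, w i = ∑ j, (C + W i j) * x j := by
    intro i
    rw [hrow x i, hsum, mul_one]
  -- a positive coordinate
  obtain ⟨i0, _, hi0⟩ : ∃ i ∈ Finset.univ, x i ≠ 0 :=
    Finset.exists_ne_zero_of_sum_ne_zero (by rw [hsum]; norm_num)
  have hx0 : 0 < x i0 := lt_of_le_of_ne (hnn i0) (Ne.symm hi0)
  have hwpos : ∀ i, 0 < w i := by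
    intro i
    rw [hwexp i]
    refine Finset.sum_pos' (fun j _ => mul_nonneg (hC i j).le (hnn j)) ⟨i0, Finset.mem_univ i0,
      mul_pos (hC i i0) hx0⟩
  -- S as a sum
  have hSx : S = ∑ i, x i * w i := by
    have h1 : ∑ i, x i * w i = ∑ i, (C * x i + x i * W.mulVec x i) := by
      refine Finset.sum_congr rfl fun i _ => ?_
      simp only [hwdef]; ring
    rw [h1, Finset.sum_add_distrib, ← Finset.mul_sum, hsum, mul_one]
    simp only [hSdef, dotProduct]
  have hSpos : 0 < S := by
    rw [hSx]
    exact Finset.sum_pos' (fun i _ => mul_nonneg (hnn i) (hwpos i).le)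
      ⟨i0, Finset.mem_univ i0, mul_pos hx0 (hwpos i0)⟩
  have hy' : ∀ i, y i = x i * w i / S := by intro i; rw [hy]
  have hynn : ∀ i, 0 ≤ y i := fun i =>
    (hy' i) ▸ div_nonneg (mul_nonneg (hnn i) (hwpos i).le) hSpos.le
  have hysum : ∑ i, y i = 1 := by
    have : ∑ i, y i = (∑ i, x i * w i) / S := by
      rw [Finset.sum_div]; exact Finset.sum_congr rfl fun i _ => hy' i
    rw [this, ← hSx, div_self hSpos.ne']
  have hS0 : S ≠ 0 := hSpos.ne'
  have hSyi : ∀ i, S * y i = x i * w i := by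
    intro i; rw [hy' i]; field_simp
  -- quadratic identity
  have hQ : ∀ z : Fin n → ℝ, (∑ i, z i = 1) →
      ∑ i, ∑ j, (C + W i j) * z i * z j = C + z ⬝ᵥ W.mulVec z := by
    intro z hz
    have h1 : ∀ i, ∑ j, (C + W i j) * z i * z j = C * z i + z i * W.mulVec z i := by
      intro i
      have h2 : ∑ j, (C + W i j) * z i * z j = z i * ∑ j, (C + W i j) * z j := by
        rw [Finset.mul_sum]
        exact Finset.sum_congr rfl fun j _ => by ring
      rw [h2, hrow z i, hz, mul_one]; ring
    rw [Finset.sum_congr rfl fun i _ => h1 i, Finset.sum_add_distrib, ← Finset.mul_sum,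
      hz, mul_one]
    simp only [dotProduct]
  -- log quantities
  set L : Fin n → ℝ := fun i => Real.log (w i / S) with hLdef
  set D : ℝ := ∑ i, y i * L i with hDdef
  have hLlb : ∀ i, 1 - S / w i ≤ L i := by
    intro i
    have h1 := Real.log_le_sub_one_of_pos (div_pos hSpos (hwpos i))
    have h2 : L i = -Real.log (S / w i) := by
      simp only [hLdef]
      rw [show w i / S = (S / w i)⁻¹ from (inv_div S (w i)).symm, Real.log_inv]
    rw [h2]; linarith
  have halg : ∀ i, y i * (1 - S / w i) = y i - x i := by
    intro i
    have h1 : y i * (S / w i) = x i := by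
      have hwi0 : w i ≠ 0 := (hwpos i).ne'
      rw [hy' i]; field_simp
    linarith [mul_one_sub (y i) (S / w i), h1]
  have hterm : ∀ i, y i - x i ≤ y i * L i := by
    intro i
    have := mul_le_mul_of_nonneg_left (hLlb i) (hynn i)
    rw [halg i] at this; exact this
  have hDnn : 0 ≤ D := by
    have h1 : ∑ i, (y i - x i) ≤ D := Finset.sum_le_sum fun i _ => hterm i
    have h2 : ∑ i, (y i - x i) = 0 := by
      rw [Finset.sum_sub_distrib, hysum, hsum]; ring
    linarith
  -- the three sums
  have hsum1 : ∑ i, ∑ j, (C + W i j) * x i * x j = S := by rw [hQ x hsum, hSdef]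
  have hsum2 : ∑ i, ∑ j, (C + W i j) * x i * x j * L i = S * D := by
    have h1 : ∀ i, ∑ j, (C + W i j) * x i * x j * L i = S * (y i * L i) := by
      intro i
      have : ∑ j, (C + W i j) * x i * x j * L i = (x i * L i) * ∑ j, (C + W i j) * x j := by
        rw [Finset.mul_sum]; exact Finset.sum_congr rfl fun j _ => by ring
      rw [this, ← hwexp i]
      rw [show x i * L i * w i = x i * w i * L i by ring, ← hSyi i]; ring
    rw [Finset.sum_congr rfl fun i _ => h1 i, ← Finset.mul_sum, hDdef]
  have hsum3 : ∑ i, ∑ j, (C + W i j) * x i * x j * L j = S * D := by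
    rw [Finset.sum_comm]
    rw [← hsum2]
    refine Finset.sum_congr rfl fun j _ => Finset.sum_congr rfl fun i _ => ?_
    rw [hW.apply j i]; ring
  -- main pointwise inequality summed
  have hptwise : ∀ i j, (C + W i j) * x i * x j * (1 + L i + L j) ≤ (C + W i j) * y i * y j := by
    intro i j
    have hri : (0:ℝ) < w i / S := div_pos (hwpos i) hSpos
    have hrj : (0:ℝ) < w j / S := div_pos (hwpos j) hSpos
    have hlog : Real.log (w i / S * (w j / S)) = L i + L j := Real.log_mul hri.ne' hrj.ne'
    have h1 : 1 + L i + L j ≤ w i / S * (w j / S) := by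
      have := Real.log_le_sub_one_of_pos (mul_pos hri hrj)
      rw [hlog] at this; linarith
    have h2 := mul_le_mul_of_nonneg_left h1
      (mul_nonneg (mul_nonneg (hC i j).le (hnn i)) (hnn j))
    have h3 : (C + W i j) * y i * y j
        = (C + W i j) * x i * x j * (w i / S * (w j / S)) := by
      rw [hy' i, hy' j]; ring
    rw [h3]; exact h2
  have hmain : S + 2 * (S * D) ≤ ∑ i, ∑ j, (C + W i j) * y i * y j := by
    have hle : ∑ i, ∑ j, (C + W i j) * x i * x j * (1 + L i + L j)
        ≤ ∑ i, ∑ j, (C + W i j) * y i * y j :=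
      Finset.sum_le_sum fun i _ => Finset.sum_le_sum fun j _ => hptwise i j
    have hexp : ∑ i, ∑ j, (C + W i j) * x i * x j * (1 + L i + L j)
        = S + (S * D + S * D) := by
      have h1 : ∀ i j, (C + W i j) * x i * x j * (1 + L i + L j)
          = (C + W i j) * x i * x j + ((C + W i j) * x i * x j * L i
            + (C + W i j) * x i * x j * L j) := fun i j => by ring
      calc ∑ i, ∑ j, (C + W i j) * x i * x j * (1 + L i + L j)
          = ∑ i, ∑ j, ((C + W i j) * x i * x j + ((C + W i j) * x i * x j * L i
            + (C + W i j) * x i * x j * L j)) := by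
            exact Finset.sum_congr rfl fun i _ => Finset.sum_congr rfl fun j _ => h1 i j
        _ = (∑ i, ∑ j, (C + W i j) * x i * x j)
            + ((∑ i, ∑ j, (C + W i j) * x i * x j * L i)
              + ∑ i, ∑ j, (C + W i j) * x i * x j * L j) := by
            simp [Finset.sum_add_distrib]
        _ = S + (S * D + S * D) := by rw [hsum1, hsum2, hsum3]
    rw [hexp] at hle; linarith
  have hQy : ∑ i, ∑ j, (C + W i j) * y i * y j = C + y ⬝ᵥ W.mulVec y := hQ y hysum
  have hineq : x ⬝ᵥ W.mulVec x ≤ y ⬝ᵥ W.mulVec y := by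
    have hSD : 0 ≤ S * D := mul_nonneg hSpos.le hDnn
    have : S ≤ C + y ⬝ᵥ W.mulVec y := by rw [← hQy]; linarith
    rw [hSdef] at this; linarith
  refine ⟨hineq, ?_, fun h => by rw [h]⟩
  intro heq
  -- equality forces D = 0
  have hQyS : C + y ⬝ᵥ W.mulVec y = S := by rw [heq, hSdef]
  have hD0 : D = 0 := by
    have h1 := hmain
    rw [hQy] at h1
    have h2 : 2 * (S * D) ≤ 0 := by linarith [hQyS]
    nlinarith [hSpos, hDnn]
  -- each term equals
  have hzero : ∀ i ∈ Finset.univ, y i * L i - (y i - x i) = 0 := by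
    rw [← Finset.sum_eq_zero_iff_of_nonneg fun i _ => by linarith [hterm i]]
    rw [Finset.sum_sub_distrib, Finset.sum_sub_distrib, hysum, hsum, ← hDdef, hD0]
    ring
  funext i
  have hgi : y i * L i = y i - x i := by linarith [hzero i (Finset.mem_univ i)]
  by_cases hwi : w i = S
  · rw [hy' i, hwi, mul_div_assoc, div_self hSpos.ne', mul_one]
  · by_cases hxi : x i = 0
    · rw [hy' i, hxi]; ring
    · exfalso
      have hxpos : 0 < x i := lt_of_le_of_ne (hnn i) (Ne.symm hxi)
      have hypos : 0 < y i := by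
        rw [hy' i]; exact div_pos (mul_pos hxpos (hwpos i)) hSpos
      have hne1 : S / w i ≠ 1 := by
        intro h
        have hS := (div_eq_iff (hwpos i).ne').mp h
        exact hwi (by linarith)
      have hstrict := Real.log_lt_sub_one_of_pos (div_pos hSpos (hwpos i)) hne1
      have hL' : 1 - S / w i < L i := by
        have h2 : L i = -Real.log (S / w i) := by
          simp only [hLdef]
          rw [show w i / S = (S / w i)⁻¹ from (inv_div S (w i)).symm, Real.log_inv]
        rw [h2]; linarith
      have := mul_lt_mul_of_pos_left hL' hypos
      rw [halg i] at this
      linarith [hgi]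
end
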